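/- Let N be a weakly classical 1-absorbing prime submodule of M, let I, J, L be proper ideals of R and K a submodule of M with IJLK ⊆ N. If (a, b, c, k) is not a classical 1-quadruple-zero of N for all a ∈ I, b ∈ J, c ∈ L and k ∈ K, then IJK ⊆ N or LK ⊆ N. -/
import Mathlib


/-- A proper submodule `N` of `M` is weakly classical 1-absorbing prime if whenever
`abcm ∈ N` and `abcm ≠ 0` for nonunits `a, b, c ∈ R` and `m ∈ M`, then `abm ∈ N` or `cm ∈ N`. -/
def IsWeaklyClassical1AbsorbingPrime {R : Type*} [CommRing R] {M : Type*} [AddCommGroup M]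
    [Module R M] (N : Submodule R M) : Prop :=
  N ≠ ⊤ ∧ ∀ a b c : R, ∀ m : M, ¬ IsUnit a → ¬ IsUnit b → ¬ IsUnit c →
    (a * b * c) • m ∈ N → (a * b * c) • m ≠ 0 → ((a * b) • m ∈ N ∨ c • m ∈ N)

/-- A proper ideal `I` of `R` is weakly 1-absorbing prime if whenever `abc ∈ I` and
`abc ≠ 0` for nonunits `a, b, c ∈ R`, then `ab ∈ I` or `c ∈ I`. -/
def IsWeakly1AbsorbingPrimeIdeal {R : Type*} [CommRing R] (I : Ideal R) : Prop :=
  I ≠ ⊤ ∧ ∀ a b c : R, ¬ IsUnit a → ¬ IsUnit b → ¬ IsUnit c →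
    a * b * c ∈ I → a * b * c ≠ 0 → (a * b ∈ I ∨ c ∈ I)

/-- For nonunits `a, b, c ∈ R` and `m ∈ M`, the tuple `(a, b, c, m)` is a classical
1-quadruple-zero of `N` if `abcm = 0`, `abm ∉ N` and `cm ∉ N`. -/
def IsClassical1QuadrupleZero {R : Type*} [CommRing R] {M : Type*} [AddCommGroup M]
    [Module R M] (N : Submodule R M) (a b c : R) (m : M) : Prop :=
  ¬ IsUnit a ∧ ¬ IsUnit b ∧ ¬ IsUnit c ∧ (a * b * c) • m = 0 ∧
    (a * b) • m ∉ N ∧ c • m ∉ N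

/-- If `N` is weakly classical 1-absorbing prime, `I, J, L` are proper
ideals, `K` is a submodule with `IJLK ⊆ N`, and `(a, b, c, k)` is not a classical
1-quadruple-zero of `N` for all `a ∈ I`, `b ∈ J`, `c ∈ L`, `k ∈ K`, then `IJK ⊆ N` or
`LK ⊆ N`. -/
theorem stmt_10 {R : Type*} [CommRing R] [Nontrivial R] {M : Type*} [AddCommGroup M]
    [Module R M] [Nontrivial M] (N : Submodule R M)
    (hN : IsWeaklyClassical1AbsorbingPrime N) (I J L : Ideal R)
    (hI : I ≠ ⊤) (hJ : J ≠ ⊤) (hL : L ≠ ⊤) (K : Submodule R M)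
    (hsub : I • (J • (L • K)) ≤ N)
    (hfree : ∀ a ∈ I, ∀ b ∈ J, ∀ c ∈ L, ∀ k ∈ K, ¬ IsClassical1QuadrupleZero N a b c k) :
    I • (J • K) ≤ N ∨ L • K ≤ N := by
  by_cases hLK : L • K ≤ N
  · exact Or.inr hLK
  left
  have key : ∀ a ∈ I, ∀ b ∈ J, ∀ c ∈ L, ∀ k ∈ K, (a*b) • k ∈ N ∨ c • k ∈ N := by
    intro a ha b hb c hc k hk
    have hna : ¬ IsUnit a := fun h => hI (I.eq_top_of_isUnit_mem ha h)
    have hnb : ¬ IsUnit b := fun h => hJ (J.eq_top_of_isUnit_mem hb h)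
    have hnc : ¬ IsUnit c := fun h => hL (L.eq_top_of_isUnit_mem hc h)
    have hmem : (a*b*c) • k ∈ N := by
      have : a • (b • (c • k)) ∈ I • (J • (L • K)) :=
        Submodule.smul_mem_smul ha (Submodule.smul_mem_smul hb (Submodule.smul_mem_smul hc hk))
      simpa [smul_smul, mul_assoc] using hsub this
    by_cases hz : (a*b*c) • k = 0
    · by_contra hcon
      push_neg at hcon
      exact hfree a ha b hb c hc k hk ⟨hna, hnb, hnc, hz, hcon.1, hcon.2⟩
    · exact hN.2 a b c k hna hnb hnc hmem hz
  obtain ⟨c₀, hc₀L, k₀, hk₀, hck₀⟩ : ∃ c₀ ∈ L, ∃ k₀ ∈ K, c₀ • k₀ ∉ N := by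
    by_contra h
    push_neg at h
    exact hLK (Submodule.smul_le.mpr h)
  have main : ∀ a ∈ I, ∀ b ∈ J, ∀ k ∈ K, (a*b) • k ∈ N := by
    intro a ha b hb k hk
    rcases key a ha b hb c₀ hc₀L k hk with h1 | h1
    · exact h1
    have habk₀ : (a*b) • k₀ ∈ N := (key a ha b hb c₀ hc₀L k₀ hk₀).resolve_right hck₀
    rcases key a ha b hb c₀ hc₀L (k + k₀) (K.add_mem hk hk₀) with h2 | h2
    · have := N.sub_mem h2 habk₀
      simpa [smul_add] using this
    · exfalso
      apply hck₀
      have := N.sub_mem h2 h1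
      simpa [smul_add] using this
  rw [Submodule.smul_le]
  intro a ha x hx
  refine Submodule.smul_induction_on hx ?_ ?_
  · intro b hb k hk
    simpa [smul_smul] using main a ha b hb k hk
  · intro x y hx' hy'
    simpa [smul_add] using N.add_mem hx' hy'
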